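/- For the exponential loss empirical objective L(w) = ∑_{n=1}^N exp(-⟨w, x_n⟩) on data points x_1,...,x_N ∈ ℝ^d, if there exists a unit-norm vector achieving margin γ > 0 (i.e., ‖u‖ ≤ 1 and ⟨u, x_n⟩ ≥ γ for all n), then for every w ∈ ℝ^d, ‖∇L(w)‖_* ≥ γ · L(w), where ‖·‖_* is the dual of the norm ‖·‖. -/

import Mathlib

open Filter Topology Finset
open scoped RealInnerProductSpace BigOperators

noncomputable section

abbrev Euc (d : ℕ) := EuclideanSpace ℝ (Fin d)

def IsNorm {d : ℕ} (N : Euc d → ℝ) : Prop :=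
  (∀ v, N v = 0 ↔ v = 0) ∧ (∀ (c : ℝ) (v), N (c • v) = |c| * N v) ∧
  (∀ v w, N (v + w) ≤ N v + N w)

lemma IsNorm.nonneg {d : ℕ} {N : Euc d → ℝ} (h : IsNorm N) (v : Euc d) : 0 ≤ N v := by
  obtain ⟨h0, hs, ht⟩ := h
  have h1 : N 0 = 0 := (h0 0).2 rfl
  have h2 : N (-v) = N v := by
    have := hs (-1) v; simpa using this
  have := ht v (-v)
  rw [add_neg_cancel, h1, h2] at this
  linarith

lemma IsNorm.le_mul_norm {d : ℕ} {N : Euc d → ℝ} (h : IsNorm N) :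
    ∃ C : ℝ, 0 ≤ C ∧ ∀ v, N v ≤ C * ‖v‖ := by
  obtain ⟨h0, hs, ht⟩ := h
  set C : ℝ := ∑ i : Fin d, N (EuclideanSpace.single i (1:ℝ)) with hC
  have hCnn : 0 ≤ C := Finset.sum_nonneg fun i _ => IsNorm.nonneg ⟨h0, hs, ht⟩ _
  refine ⟨C, hCnn, fun v => ?_⟩
  have hv : v = ∑ i : Fin d, v i • EuclideanSpace.single i (1:ℝ) := by
    ext j
    rw [WithLp.ofLp_sum, Fintype.sum_apply]
    simp [EuclideanSpace.single_apply]
  calc N v = N (∑ i : Fin d, v i • EuclideanSpace.single i (1:ℝ)) := by rw [← hv]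
    _ ≤ ∑ i : Fin d, N (v i • EuclideanSpace.single i (1:ℝ)) := by
        classical
        refine Finset.le_sum_of_subadditive N ((h0 0).2 rfl).le ht _ _
    _ = ∑ i : Fin d, |v i| * N (EuclideanSpace.single i (1:ℝ)) := by
        simp [hs]
    _ ≤ ∑ i : Fin d, ‖v‖ * N (EuclideanSpace.single i (1:ℝ)) := by
        refine Finset.sum_le_sum fun i _ => ?_
        exact mul_le_mul_of_nonneg_right
          (by
            have h4 : v i = ⟪EuclideanSpace.single i (1:ℝ), v⟫ := by
              simp [EuclideanSpace.inner_single_left]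
            calc |v i| = |⟪EuclideanSpace.single i (1:ℝ), v⟫| := by rw [h4]
              _ ≤ ‖EuclideanSpace.single i (1:ℝ)‖ * ‖v‖ := abs_real_inner_le_norm _ _
              _ = ‖v‖ := by rw [EuclideanSpace.norm_single]; simp)
          (IsNorm.nonneg ⟨h0, hs, ht⟩ _)
    _ = C * ‖v‖ := by rw [← Finset.mul_sum, mul_comm]

lemma IsNorm.continuous {d : ℕ} {N : Euc d → ℝ} (h : IsNorm N) : Continuous N := by
  obtain ⟨C, hC0, hC⟩ := h.le_mul_norm
  have lip : LipschitzWith (Real.toNNReal C) N := by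
    refine LipschitzWith.of_dist_le_mul fun a b => ?_
    rw [Real.dist_eq, Real.coe_toNNReal _ hC0, dist_eq_norm]
    have h1 : N a - N b ≤ C * ‖a - b‖ := by
      have := h.2.2 b (a - b)
      simp only [add_sub_cancel] at this
      have := hC (a - b)
      linarith
    have h2 : N b - N a ≤ C * ‖a - b‖ := by
      have := h.2.2 a (b - a)
      simp only [add_sub_cancel] at this
      have h3 := hC (b - a)
      rw [norm_sub_rev] at h3
      linarith
    rw [abs_sub_le_iff]; exact ⟨h1, h2⟩
  exact lip.continuous

lemma IsNorm.mul_norm_le {d : ℕ} {N : Euc d → ℝ} (h : IsNorm N) :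
    ∃ m : ℝ, 0 < m ∧ ∀ v, m * ‖v‖ ≤ N v := by
  by_cases hne : (Metric.sphere (0 : Euc d) 1).Nonempty
  · obtain ⟨v₀, hv₀, hmin⟩ := (isCompact_sphere (0 : Euc d) 1).exists_isMinOn hne
      h.continuous.continuousOn
    have hv₀n : ‖v₀‖ = 1 := by simpa using hv₀
    have hv₀0 : v₀ ≠ 0 := by intro e; rw [e] at hv₀n; simp at hv₀n
    refine ⟨N v₀, lt_of_le_of_ne (h.nonneg v₀) (fun e => hv₀0 ((h.1 v₀).1 e.symm)), fun v => ?_⟩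
    rcases eq_or_ne v 0 with rfl | hv
    · simpa using h.nonneg (0 : Euc d)
    · have hvn : ‖v‖ ≠ 0 := norm_ne_zero_iff.2 hv
      have hmem : (‖v‖⁻¹ • v) ∈ Metric.sphere (0 : Euc d) 1 := by
        simp [norm_smul, abs_of_nonneg (inv_nonneg.2 (norm_nonneg v)), inv_mul_cancel₀ hvn]
      have hthis := hmin hmem
      simp only [Set.mem_setOf_eq] at hthis
      have heq : N (‖v‖⁻¹ • v) = ‖v‖⁻¹ * N v := by
        rw [h.2.1, abs_of_nonneg (inv_nonneg.2 (norm_nonneg v))]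
      rw [heq] at hthis
      have hpos : 0 < ‖v‖ := lt_of_le_of_ne (norm_nonneg v) (Ne.symm hvn)
      calc N v₀ * ‖v‖ ≤ (‖v‖⁻¹ * N v) * ‖v‖ := by
            exact mul_le_mul_of_nonneg_right hthis (norm_nonneg v)
        _ = N v := by field_simp
  · refine ⟨1, one_pos, fun v => ?_⟩
    rcases eq_or_ne v 0 with rfl | hv
    · simpa using h.nonneg (0 : Euc d)
    · exact absurd ⟨‖v‖⁻¹ • v, by
        simp [norm_smul, abs_of_nonneg (inv_nonneg.2 (norm_nonneg v)),
          inv_mul_cancel₀ (norm_ne_zero_iff.2 hv)]⟩ hne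

def dualNorm {d : ℕ} (N : Euc d → ℝ) (y : Euc d) : ℝ :=
  sSup {s | ∃ v, N v ≤ 1 ∧ s = ⟪y, v⟫}

def expLoss {d N : ℕ} (x : Fin N → Euc d) (u : Euc d) : ℝ :=
  ∑ n, Real.exp (-⟪u, x n⟫)

def negGrad {d N : ℕ} (x : Fin N → Euc d) (u : Euc d) : Euc d :=
  ∑ n, Real.exp (-⟪u, x n⟫) • x n

theorem dualNorm_grad_ge_margin_mul_loss {d N : ℕ} (Nrm : Euc d → ℝ)
    (hNrm : IsNorm Nrm) (x : Fin N → Euc d)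
    (γ : ℝ) (hγ : 0 < γ) (u : Euc d) (hu : Nrm u ≤ 1)
    (hmargin : ∀ n, γ ≤ ⟪u, x n⟫) (w : Euc d) :
    γ * expLoss x w ≤ dualNorm Nrm (-(negGrad x w)) := by
  set y : Euc d := -(negGrad x w) with hy
  -- bounded above
  obtain ⟨m, hm, hmle⟩ := hNrm.mul_norm_le
  have hbdd : BddAbove {s | ∃ v, Nrm v ≤ 1 ∧ s = ⟪y, v⟫} := by
    refine ⟨‖y‖ * m⁻¹, fun s hs => ?_⟩
    obtain ⟨v, hv, rfl⟩ := hs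
    have hvle : ‖v‖ ≤ m⁻¹ := by
      have h1 : m * ‖v‖ ≤ 1 := (hmle v).trans hv
      calc ‖v‖ = m⁻¹ * (m * ‖v‖) := by field_simp
        _ ≤ m⁻¹ * 1 := mul_le_mul_of_nonneg_left h1 (inv_nonneg.2 hm.le)
        _ = m⁻¹ := mul_one _
    calc ⟪y, v⟫ ≤ ‖y‖ * ‖v‖ := real_inner_le_norm y v
      _ ≤ ‖y‖ * m⁻¹ := mul_le_mul_of_nonneg_left hvle (norm_nonneg y)
  -- the element
  have hmem : ⟪y, -u⟫ ∈ {s | ∃ v, Nrm v ≤ 1 ∧ s = ⟪y, v⟫} := by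
    refine ⟨-u, ?_, rfl⟩
    have : Nrm (-u) = Nrm u := by
      have := hNrm.2.1 (-1) u; simpa using this
    rw [this]; exact hu
  have hle : γ * expLoss x w ≤ ⟪y, -u⟫ := by
    have hval : ⟪y, -u⟫ = ∑ n, Real.exp (-⟪w, x n⟫) * ⟪u, x n⟫ := by
      rw [hy, inner_neg_neg, negGrad, sum_inner]
      refine Finset.sum_congr rfl fun n _ => ?_
      rw [real_inner_smul_left, real_inner_comm (x n) u]
    rw [hval, expLoss, Finset.mul_sum]
    refine Finset.sum_le_sum fun n _ => ?_
    rw [mul_comm γ]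
    exact mul_le_mul_of_nonneg_left (hmargin n) (Real.exp_pos _).le
  exact hle.trans (le_csSup hbdd hmem)

end
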